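/- Let $v$ be a valuation on a field $F$, with valuation ring $\mathcal{O}_v$, maximal ideal $\mathcal{M}_v$ and residue field $\kappa_v$. Define $K^M_*(v) = K^M_*(F)/I$ where $I$ is the graded ideal generated by symbols $\{u\}$ with $u \in 1+\mathcal{M}_v$. Then there is a unique graded ring homomorphism $i : K^M_*(\kappa_v) \to K^M_*(v)$ such that for all units $u_1, \dots, u_n \in \mathcal{O}_v^\times$, $i(\{\bar u_1, \dots, \bar u_n\})$ equals the class of $\{u_1, \dots, u_n\}$ in $K^M_*(v)$. -/

import Mathlib

/-- The subgroup of relations defining Milnor K-theory: multilinearity and the Steinberg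
relation. -/
def milnorRel (n : ℕ) (K : Type) [CommRing K] :
    AddSubgroup (FreeAbelianGroup (Fin n → Kˣ)) :=
  AddSubgroup.closure
    ({x | ∃ (u : Fin n → Kˣ) (i : Fin n) (s t : Kˣ), u i = s * t ∧
        x = FreeAbelianGroup.of u - FreeAbelianGroup.of (Function.update u i s) -
          FreeAbelianGroup.of (Function.update u i t)} ∪
     {x | ∃ (u : Fin n → Kˣ) (i j : Fin n), i ≠ j ∧ ((u i : K) + (u j : K) = 1) ∧
        x = FreeAbelianGroup.of u})

/-- The `n`-th Milnor K-group of `K`. -/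
def MilnorK (n : ℕ) (K : Type) [CommRing K] : Type :=
  FreeAbelianGroup (Fin n → Kˣ) ⧸ milnorRel n K

instance (n : ℕ) (K : Type) [CommRing K] : AddCommGroup (MilnorK n K) :=
  QuotientAddGroup.Quotient.addCommGroup _

/-- The symbol `{u 0, …, u (n-1)}` in Milnor K-theory. -/
def MilnorK.symbol {n : ℕ} {K : Type} [CommRing K] (u : Fin n → Kˣ) : MilnorK n K :=
  QuotientAddGroup.mk (FreeAbelianGroup.of u)

/-- The degree-`n` part of the graded ideal of `K^M_*(F)` generated by the symbols `{u}`
with `u ∈ 1 + 𝓜_v`: the subgroup generated by symbols with an entry in `1 + 𝓜_v`. -/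
def milnorValRel (n : ℕ) (F : Type) [Field F] (A : ValuationSubring F) :
    AddSubgroup (MilnorK n F) :=
  AddSubgroup.closure
    {x | ∃ u : Fin n → Fˣ, (∃ i : Fin n, ∃ m ∈ IsLocalRing.maximalIdeal ↥A,
      (u i : F) = 1 + (m : ↥A)) ∧ x = MilnorK.symbol u}

/-- Milnor K-theory of a valuation: `K^M_*(v) = K^M_*(F)/(1 + 𝓜_v)`. -/
def MilnorKv (n : ℕ) (F : Type) [Field F] (A : ValuationSubring F) : Type :=
  MilnorK n F ⧸ milnorValRel n F A

instance (n : ℕ) (F : Type) [Field F] (A : ValuationSubring F) :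
    AddCommGroup (MilnorKv n F A) :=
  QuotientAddGroup.Quotient.addCommGroup _

open IsLocalRing Function

section helpers

variable {F : Type} [Field F] (A : ValuationSubring F)

lemma exists_liftUnit (x : (ResidueField ↥A)ˣ) : ∃ a : (↥A)ˣ, Units.map (residue ↥A).toMonoidHom a = x := by
  obtain ⟨a, ha⟩ := residue_surjective (R := ↥A) (x : ResidueField ↥A)
  have hx : (x : ResidueField ↥A) ≠ 0 := Units.ne_zero x
  have hu : IsUnit a := by
    by_contra h
    have hm : a ∈ maximalIdeal ↥A := h
    rw [← Ideal.Quotient.eq_zero_iff_mem] at hm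
    exact hx (ha ▸ hm)
  exact ⟨hu.unit, Units.ext (by simpa [hu.unit_spec] using ha)⟩

noncomputable def liftU (x : (ResidueField ↥A)ˣ) : (↥A)ˣ :=
  (exists_liftUnit A x).choose

lemma resU_liftU (x : (ResidueField ↥A)ˣ) : Units.map (residue ↥A).toMonoidHom (liftU A x) = x :=
  (exists_liftUnit A x).choose_spec

lemma residue_liftU (x : (ResidueField ↥A)ˣ) :
    residue ↥A ((liftU A x : ↥A)) = (x : ResidueField ↥A) :=
  congrArg Units.val (resU_liftU A x)

lemma comp_update' {α β : Type} {ι : Type} [DecidableEq ι]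
    (g : α → β) (u : ι → α) (i : ι) (v : α) :
    (fun j => g (update u i v j)) = update (fun j => g (u j)) i (g v) := by
  funext j
  rcases eq_or_ne j i with h | h
  · subst h; simp
  · simp [update_of_ne h]

/-- image of a symbol of `A`-units in `MilnorKv` -/
noncomputable def symA {n : ℕ} (u : Fin n → (↥A)ˣ) : MilnorKv n F A :=
  QuotientAddGroup.mk (MilnorK.symbol (fun j => Units.map A.subtype.toMonoidHom (u j)))

lemma symbol_mul {n : ℕ} {K : Type} [CommRing K] (u : Fin n → Kˣ) (i : Fin n) (s t : Kˣ) :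
    MilnorK.symbol (update u i (s * t)) =
      MilnorK.symbol (update u i s) + MilnorK.symbol (update u i t) := by
  have h : FreeAbelianGroup.of (update u i (s * t)) -
      FreeAbelianGroup.of (update u i s) - FreeAbelianGroup.of (update u i t) ∈
      milnorRel n K := by
    apply AddSubgroup.subset_closure
    left
    exact ⟨update u i (s * t), i, s, t, by simp, by rw [update_idem, update_idem]⟩
  unfold MilnorK.symbol
  show ((FreeAbelianGroup.of (update u i (s * t)) : FreeAbelianGroup (Fin n → Kˣ) ⧸ milnorRel n K)) =
    (FreeAbelianGroup.of (update u i s) : FreeAbelianGroup (Fin n → Kˣ) ⧸ milnorRel n K) +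
      (FreeAbelianGroup.of (update u i t) : FreeAbelianGroup (Fin n → Kˣ) ⧸ milnorRel n K)
  rw [← QuotientAddGroup.mk_add, QuotientAddGroup.eq]
  have e : -(FreeAbelianGroup.of (update u i (s * t))) +
      (FreeAbelianGroup.of (update u i s) + FreeAbelianGroup.of (update u i t)) =
      -(FreeAbelianGroup.of (update u i (s * t)) -
        FreeAbelianGroup.of (update u i s) - FreeAbelianGroup.of (update u i t)) := by
    abel
  rw [e]
  exact neg_mem h

lemma symA_mul {n : ℕ} (u : Fin n → (↥A)ˣ) (i : Fin n) (s t : (↥A)ˣ) :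
    symA A (update u i (s * t)) = symA A (update u i s) + symA A (update u i t) := by
  unfold symA
  rw [comp_update', comp_update', comp_update', map_mul, symbol_mul,
    QuotientAddGroup.mk_add]
  rfl

lemma symA_one {n : ℕ} (u : Fin n → (↥A)ˣ) (i : Fin n) (ε : (↥A)ˣ)
    (hε : Units.map (residue ↥A).toMonoidHom ε = 1) : symA A (update u i ε) = 0 := by
  unfold symA
  refine (QuotientAddGroup.eq_zero_iff _).mpr ?_
  apply AddSubgroup.subset_closure
  refine ⟨fun j => Units.map A.subtype.toMonoidHom (update u i ε j), ⟨i, ?_⟩, rfl⟩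
  refine ⟨(ε : ↥A) - 1, ?_, ?_⟩
  · rw [← Ideal.Quotient.eq_zero_iff_mem]
    have h1 : residue ↥A (ε : ↥A) = 1 := congrArg Units.val hε
    show residue ↥A ((ε : ↥A) - 1) = 0
    rw [map_sub, map_one, h1, sub_self]
  · show ((Units.map A.subtype.toMonoidHom (update u i ε i) : F)) = 1 + _
    rw [update_self]
    show A.subtype (ε : ↥A) = 1 + (((ε : ↥A) - 1 : ↥A) : F)
    rw [show A.subtype (ε : ↥A) = ((ε : ↥A) : F) from rfl]
    push_cast
    ring

lemma symA_congr {n : ℕ} (U V : Fin n → (↥A)ˣ) (h : ∀ j, Units.map (residue ↥A).toMonoidHom (U j) = Units.map (residue ↥A).toMonoidHom (V j)) :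
    symA A U = symA A V := by
  have key : ∀ k : ℕ, k ≤ n →
      symA A (fun j => if j.val < k then V j else U j) = symA A U := by
    intro k
    induction k with
    | zero => intro _; simp
    | succ k ih =>
      intro hk
      have hkn : k < n := hk
      have e1 : (fun j : Fin n => if j.val < k + 1 then V j else U j)
          = update (fun j => if j.val < k then V j else U j) ⟨k, hkn⟩ (V ⟨k, hkn⟩) := by
        funext j
        rcases eq_or_ne j ⟨k, hkn⟩ with hji | hji
        · subst hji; simp
        · have hne : j.val ≠ k := fun hc => hji (Fin.ext hc)
          have hiff : (j.val < k + 1) = (j.val < k) := by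
            simp only [eq_iff_iff]; omega
          simp [update_of_ne hji, hiff]
      have hres : Units.map (residue ↥A).toMonoidHom ((U ⟨k, hkn⟩)⁻¹ * V ⟨k, hkn⟩) = 1 := by
        rw [map_mul, map_inv, ← h ⟨k, hkn⟩, inv_mul_cancel]
      have hVi : V ⟨k, hkn⟩ = U ⟨k, hkn⟩ * ((U ⟨k, hkn⟩)⁻¹ * V ⟨k, hkn⟩) := by group
      have e2 : update (fun j : Fin n => if j.val < k then V j else U j) ⟨k, hkn⟩ (U ⟨k, hkn⟩)
          = (fun j : Fin n => if j.val < k then V j else U j) := by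
        funext j
        rcases eq_or_ne j ⟨k, hkn⟩ with hji | hji
        · subst hji; simp
        · simp [update_of_ne hji]
      rw [e1, hVi, symA_mul, symA_one A _ _ _ hres, add_zero, e2]
      exact ih (le_of_lt hk)
  have hkey := key n (le_refl n)
  have e3 : (fun j : Fin n => if j.val < n then V j else U j) = V := by
    funext j; simp [j.isLt]
  rw [e3] at hkey
  exact hkey.symm

noncomputable def preHom (n : ℕ) :
    FreeAbelianGroup (Fin n → (ResidueField ↥A)ˣ) →+ MilnorKv n F A :=
  FreeAbelianGroup.lift (fun u => symA A (fun j => liftU A (u j)))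

lemma preHom_of {n : ℕ} (u : Fin n → (ResidueField ↥A)ˣ) :
    preHom A n (FreeAbelianGroup.of u) = symA A (fun j => liftU A (u j)) :=
  FreeAbelianGroup.lift_apply_of _ _

lemma preHom_ker (n : ℕ) : milnorRel n (ResidueField ↥A) ≤ (preHom A n).ker := by
  rw [milnorRel, AddSubgroup.closure_le]
  rintro x (⟨u, i, s, t, hst, rfl⟩ | ⟨u, i, j, hij, hsum, rfl⟩)
  · simp only [SetLike.mem_coe, AddMonoidHom.mem_ker, map_sub, preHom_of]
    rw [comp_update', comp_update']
    have h1 : symA A (fun j => liftU A (u j)) =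
        symA A (update (fun j => liftU A (u j)) i (liftU A s * liftU A t)) := by
      apply symA_congr
      intro j
      rcases eq_or_ne j i with hj | hj
      · subst hj
        rw [update_self, map_mul, resU_liftU, resU_liftU, resU_liftU, hst]
      · rw [update_of_ne hj]
    rw [h1, symA_mul]
    abel
  · simp only [SetLike.mem_coe, AddMonoidHom.mem_ker, preHom_of]
    have hres_ne : residue ↥A (1 - ((liftU A (u i) : ↥A))) ≠ 0 := by
      have h1 : residue ↥A ((liftU A (u i) : ↥A)) = (u i : ResidueField ↥A) :=
        residue_liftU A (u i)
      have h2 : residue ↥A (1 - ((liftU A (u i) : ↥A))) = (u j : ResidueField ↥A) := by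
        rw [map_sub, map_one, h1, ← hsum]; ring
      rw [h2]
      exact Units.ne_zero _
    have hu : IsUnit (1 - ((liftU A (u i) : ↥A))) := by
      by_contra hcon
      exact hres_ne ((Ideal.Quotient.eq_zero_iff_mem).mpr hcon)
    have hLV : symA A (fun j => liftU A (u j)) =
        symA A (update (fun j => liftU A (u j)) j hu.unit) := by
      apply symA_congr
      intro k
      rcases eq_or_ne k j with hk | hk
      · subst hk
        rw [update_self]
        apply Units.ext
        show residue ↥A ((liftU A (u k) : ↥A)) = residue ↥A ((hu.unit : ↥A))
        rw [residue_liftU, hu.unit_spec, map_sub, map_one, residue_liftU, ← hsum]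
        ring
      · rw [update_of_ne hk]
    rw [hLV]
    unfold symA
    have h0 : MilnorK.symbol
        (fun k => Units.map A.subtype.toMonoidHom
          (update (fun j => liftU A (u j)) j hu.unit k)) = (0 : MilnorK n F) := by
      rw [MilnorK.symbol]
      refine (QuotientAddGroup.eq_zero_iff _).mpr ?_
      apply AddSubgroup.subset_closure
      right
      refine ⟨_, i, j, hij, ?_, rfl⟩
      rw [update_of_ne hij, update_self]
      show ((liftU A (u i) : ↥A) : F) + ((hu.unit : ↥A) : F) = 1
      rw [hu.unit_spec]
      push_cast
      ring
    rw [h0, QuotientAddGroup.mk_zero]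
    rfl

noncomputable def theHom (n : ℕ) : MilnorK n (ResidueField ↥A) →+ MilnorKv n F A :=
  QuotientAddGroup.lift (milnorRel n (ResidueField ↥A)) (preHom A n)
    (fun x hx => (AddMonoidHom.mem_ker).mp (preHom_ker A n hx))

lemma theHom_symbol {n : ℕ} (u : Fin n → (ResidueField ↥A)ˣ) :
    theHom A n (MilnorK.symbol u) = symA A (fun j => liftU A (u j)) := by
  show preHom A n (FreeAbelianGroup.of u) = _
  exact preHom_of A u

end helpers

/-- Let `v` be a valuation on a field `F` with valuation ring `𝒪_v = A`,
maximal ideal `𝓜_v` and residue field `κ_v`. Let `K^M_*(v) = K^M_*(F)/I`, where `I` is the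
graded ideal generated by symbols `{u}` with `u ∈ 1 + 𝓜_v`. Then there is a unique (graded)
family of homomorphisms `i : K^M_n(κ_v) → K^M_n(v)` sending, for units `u₁, …, uₙ ∈ 𝒪_v^×`,
the symbol `{ū₁, …, ūₙ}` to the class of `{u₁, …, uₙ}` in `K^M_n(v)`.  (Since symbols
generate and multiply by concatenation, this is exactly the unique graded ring homomorphism
of the statement.) -/
theorem stmt_9 (F : Type) [Field F] (A : ValuationSubring F) :
    ∃! i : ∀ n : ℕ, MilnorK n (IsLocalRing.ResidueField ↥A) →+ MilnorKv n F A,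
      ∀ (n : ℕ) (u : Fin n → (↥A)ˣ),
        i n (MilnorK.symbol (fun j => Units.map (IsLocalRing.residue ↥A).toMonoidHom (u j))) =
          QuotientAddGroup.mk
            (MilnorK.symbol (fun j => Units.map A.subtype.toMonoidHom (u j))) := by
  refine ⟨theHom A, ?_, ?_⟩
  · intro n u
    rw [theHom_symbol]
    exact symA_congr A _ u (fun j => resU_liftU A (Units.map (IsLocalRing.residue ↥A).toMonoidHom (u j)))
  · intro g hg
    funext n
    apply QuotientAddGroup.addMonoidHom_ext
    apply FreeAbelianGroup.lift_ext
    intro v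
    have hv : v = fun j => Units.map (IsLocalRing.residue ↥A).toMonoidHom (liftU A (v j)) := by
      funext j; rw [resU_liftU]
    show g n (MilnorK.symbol v) = theHom A n (MilnorK.symbol v)
    rw [theHom_symbol]
    calc g n (MilnorK.symbol v)
        = g n (MilnorK.symbol
            (fun j => Units.map (IsLocalRing.residue ↥A).toMonoidHom (liftU A (v j)))) := by
          rw [← hv]
      _ = symA A (fun j => liftU A (v j)) := hg n (fun j => liftU A (v j))
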